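/- Monotonicity of genus under edge deletion in ribbon graphs. Let G = (H, σ, θ) be a combinatorial map encoding an orientable ribbon graph, and let F′ ⊆ F ⊆ E be subsets of the edge set. Then k(F′) − bc(F′) + n(F′) ≤ k(F) − bc(F) + n(F); that is, the genus of a spanning subgraph does not exceed the genus of the ambient ribbon subgraph. -/

import Mathlib

open Finset
open scoped Classical

/-- The permutation `θ_F` acting as `θ` on the half-edges belonging to edges of the
spanning subgraph (encoded by the `θ`-invariant set `S` of half-edges) and as the
identity elsewhere.  Defined whenever `S` is `θ`-invariant and `θ` is an involution
(and as the identity permutation otherwise). -/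
noncomputable def restrictPerm {H : Type*} [DecidableEq H] (θ : Equiv.Perm H) (S : Finset H) :
    Equiv.Perm H :=
  if hcl : (∀ a ∈ S, θ a ∈ S) ∧ (∀ a, θ (θ a) = a) then
    { toFun := fun a => if a ∈ S then θ a else a
      invFun := fun a => if a ∈ S then θ a else a
      left_inv := fun a => by
        by_cases h : a ∈ S
        · simp [h, hcl.1 a h, hcl.2 a]
        · simp [h]
      right_inv := fun a => by
        by_cases h : a ∈ S
        · simp [h, hcl.1 a h, hcl.2 a]
        · simp [h] }
  else 1

/-- The number of orbits of the cyclic group generated by a permutation. -/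
noncomputable def permOrbits {H : Type*} [Fintype H] (π : Equiv.Perm H) : ℕ :=
  Nat.card (MulAction.orbitRel.Quotient (Subgroup.zpowers π) H)

/-- `v(G)`: the number of vertices, i.e. the number of orbits of `σ`. -/
noncomputable def vCount {H : Type*} [Fintype H] (σ : Equiv.Perm H) : ℕ := permOrbits σ

/-- `bc(F)`: the number of boundary components of the spanning subgraph, i.e. the
number of orbits of `σ ∘ θ_F`. -/
noncomputable def bcCount {H : Type*} [Fintype H] [DecidableEq H]
    (σ θ : Equiv.Perm H) (S : Finset H) : ℕ :=
  permOrbits (σ * restrictPerm θ S)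

/-- `k(F)`: the number of connected components of the spanning subgraph, i.e. the
number of orbits of the subgroup generated by `σ` and `θ_F`. -/
noncomputable def kCount {H : Type*} [Fintype H] [DecidableEq H]
    (σ θ : Equiv.Perm H) (S : Finset H) : ℕ :=
  Nat.card (MulAction.orbitRel.Quotient
    (Subgroup.closure {σ, restrictPerm θ S} : Subgroup (Equiv.Perm H)) H)

/-- `e(F)`: the number of edges of the spanning subgraph, i.e. half the number of
half-edges in `S` (as an integer, for use in exponents). -/
def eCount {H : Type*} (S : Finset H) : ℤ := (S.card / 2 : ℕ)

/-- `r(F) = v(G) - k(F)`: the rank of the spanning subgraph. -/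
noncomputable def rCount {H : Type*} [Fintype H] [DecidableEq H]
    (σ θ : Equiv.Perm H) (S : Finset H) : ℤ :=
  (vCount σ : ℤ) - (kCount σ θ S : ℤ)

/-- `n(F) = e(F) - r(F)`: the nullity of the spanning subgraph. -/
noncomputable def nCount {H : Type*} [Fintype H] [DecidableEq H]
    (σ θ : Equiv.Perm H) (S : Finset H) : ℤ :=
  eCount S - rCount σ θ S

/-- The spanning subgraphs `F ⊆ E`, encoded as the `θ`-invariant subsets of the
set of half-edges. -/
def spanningSets {H : Type*} [Fintype H] [DecidableEq H] (θ : Equiv.Perm H) :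
    Finset (Finset H) :=
  Finset.univ.filter (fun S => ∀ a ∈ S, θ a ∈ S)

open Equiv MulAction Subgroup

section Machinery
variable {H : Type*} [Fintype H] [DecidableEq H]

/-- surjectivity / monotone counting -/
lemma natCard_quot_le_of_le {r s : Setoid H} (h : ∀ x y, r x y → s x y) :
    Nat.card (Quotient s) ≤ Nat.card (Quotient r) := by
  have hs : Function.Surjective (Quotient.map' (id : H → H) (fun x y hxy => h x y hxy) :
      Quotient r → Quotient s) := by
    intro q
    induction q using Quotient.inductionOn' with
    | h x => exact ⟨Quotient.mk'' x, rfl⟩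
  exact Nat.card_le_card_of_surjective _ hs

lemma natCard_option (β : Type*) [Finite β] : Nat.card (Option β) = Nat.card β + 1 := by
  have := Fintype.ofFinite β
  simp [Nat.card_eq_fintype_card]

/-- orbit relation of a closure is contained in any setoid compatible with the generators -/
lemma orbitRel_closure_le (Tset : Set (Equiv.Perm H)) (r : Setoid H)
    (h : ∀ g ∈ Tset, ∀ x, r (g x) x) :
    ∀ x y, (MulAction.orbitRel (Subgroup.closure Tset) H) x y → r x y := by
  have key : ∀ g ∈ Subgroup.closure Tset, ∀ x : H, r (g x) x := by
    intro g hg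
    induction hg using Subgroup.closure_induction with
    | mem g hgT => exact h g hgT
    | one => intro x; exact r.refl x
    | mul g k hgc hkc hg hk =>
        intro x
        have h1 : r (g (k x)) (k x) := hg (k x)
        have h2 : r (k x) x := hk x
        exact r.trans' (by simpa using h1) h2
    | inv g hgc hg =>
        intro x
        have := hg (g⁻¹ x)
        rw [show g (g⁻¹ x) = x from Equiv.apply_symm_apply g x] at this
        exact r.symm' this
  intro x y hxy
  rw [MulAction.orbitRel_apply, MulAction.mem_orbit_iff] at hxy
  obtain ⟨⟨g, hgmem⟩, hgx⟩ := hxy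
  have : g y = x := hgx
  rw [← this]
  exact key g hgmem y

lemma orbitRel_gen {G : Subgroup (Equiv.Perm H)} {g : Equiv.Perm H} (hg : g ∈ G) (x : H) :
    (MulAction.orbitRel G H) (g x) x := by
  rw [MulAction.orbitRel_apply, MulAction.mem_orbit_iff]
  exact ⟨⟨g, hg⟩, rfl⟩

end Machinery
section Machinery2
variable {H : Type*} [Fintype H] [DecidableEq H]

/-- the join of a setoid with the identification of `a` and `b` -/
def pairJoin (r : Setoid H) (a b : H) : Setoid H where
  r x y := r x y ∨ (r x a ∧ r b y) ∨ (r x b ∧ r a y)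
  iseqv := by
    constructor
    · intro x; exact Or.inl (r.refl x)
    · rintro x y (h | ⟨h1, h2⟩ | ⟨h1, h2⟩)
      · exact Or.inl (r.symm' h)
      · exact Or.inr (Or.inr ⟨r.symm' h2, r.symm' h1⟩)
      · exact Or.inr (Or.inl ⟨r.symm' h2, r.symm' h1⟩)
    · rintro x y z (h | ⟨h1, h2⟩ | ⟨h1, h2⟩) (h' | ⟨h1', h2'⟩ | ⟨h1', h2'⟩)
      · exact Or.inl (r.trans' h h')
      · exact Or.inr (Or.inl ⟨r.trans' h h1', h2'⟩)
      · exact Or.inr (Or.inr ⟨r.trans' h h1', h2'⟩)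
      · exact Or.inr (Or.inl ⟨h1, r.trans' h2 h'⟩)
      · exact Or.inl (r.trans' h1 (r.trans' (r.symm' (r.trans' h2 h1')) h2'))
      · exact Or.inl (r.trans' h1 h2')
      · exact Or.inr (Or.inr ⟨h1, r.trans' h2 h'⟩)
      · exact Or.inl (r.trans' h1 h2')
      · exact Or.inl (r.trans' h1 (r.trans' (r.symm' (r.trans' h2 h1')) h2'))

lemma pairJoin_rel {r : Setoid H} {a b x y : H} :
    (pairJoin r a b) x y ↔ r x y ∨ (r x a ∧ r b y) ∨ (r x b ∧ r a y) := Iff.rfl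

/-- if `r ≤ s ≤ r ⊔ pair a b` then the `r`-classes number at most one more than the
`s`-classes -/
lemma natCard_quot_le_add_one {r s : Setoid H} (a b : H)
    (hle : ∀ x y, r x y → s x y)
    (h : ∀ x y, s x y → (pairJoin r a b) x y) :
    Nat.card (Quotient r) ≤ Nat.card (Quotient s) + 1 := by
  classical
  let f : Quotient r → Quotient s := Quotient.map' id (fun x y hxy => hle x y hxy)
  let g : Quotient r → Option (Quotient s) := fun q =>
    if q = Quotient.mk'' b then none else some (f q)
  have hg : Function.Injective g := by
    intro x y hxy
    by_cases hx : x = Quotient.mk'' b <;> by_cases hy : y = Quotient.mk'' b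
    · rw [hx, hy]
    · simp [g, hx, hy] at hxy
    · simp [g, hx, hy] at hxy
    · simp only [g, if_neg hx, if_neg hy, Option.some.injEq] at hxy
      induction x using Quotient.inductionOn' with
      | h u =>
      induction y using Quotient.inductionOn' with
      | h v =>
      have hfuv : Quotient.mk'' u = (Quotient.mk'' v : Quotient s) := hxy
      have hsuv : s u v := Quotient.eq''.1 hfuv
      rcases h u v hsuv with h' | ⟨h1, h2⟩ | ⟨h1, h2⟩
      · exact Quotient.sound' h'
      · exact absurd (Quotient.sound' (r.symm' h2) : Quotient.mk'' v = Quotient.mk'' b) hy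
      · exact absurd (Quotient.sound' h1 : Quotient.mk'' u = Quotient.mk'' b) hx
  calc Nat.card (Quotient r) ≤ Nat.card (Option (Quotient s)) :=
        Nat.card_le_card_of_injective g hg
    _ = Nat.card (Quotient s) + 1 := by
        have := Fintype.ofFinite (Quotient s)
        simp [Nat.card_eq_fintype_card]

/-- if `r ≤ s` and `s` genuinely identifies two distinct `r`-classes, then the
`s`-classes number at most `|Q_r| - 1`. -/
lemma natCard_quot_add_one_le {r s : Setoid H} (a b : H)
    (hle : ∀ x y, r x y → s x y) (hab : s a b) (hnab : ¬ r a b) :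
    Nat.card (Quotient s) + 1 ≤ Nat.card (Quotient r) := by
  classical
  let f : Quotient r → Quotient s := Quotient.map' id (fun x y hxy => hle x y hxy)
  let F : {q : Quotient r // q ≠ Quotient.mk'' b} → Quotient s := fun q => f q.1
  have hF : Function.Surjective F := by
    intro z
    induction z using Quotient.inductionOn' with
    | h w =>
    by_cases hw : (Quotient.mk'' w : Quotient r) = Quotient.mk'' b
    · refine ⟨⟨Quotient.mk'' a, ?_⟩, ?_⟩
      · intro hcon
        exact hnab (Quotient.eq''.1 hcon)
      · show (Quotient.mk'' a : Quotient s) = Quotient.mk'' w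
        have hrwb : r w b := Quotient.eq''.1 hw
        exact Quotient.sound' (s.trans' hab (s.symm' (hle w b hrwb)))
    · exact ⟨⟨Quotient.mk'' w, hw⟩, rfl⟩
  have h1 : Nat.card (Quotient s) ≤ Nat.card {q : Quotient r // q ≠ Quotient.mk'' b} :=
    Nat.card_le_card_of_surjective F hF
  have h2 : Nat.card {q : Quotient r // q ≠ Quotient.mk'' b} + 1 ≤ Nat.card (Quotient r) := by
    have := Fintype.ofFinite (Quotient r)
    rw [Nat.card_eq_fintype_card, Nat.card_eq_fintype_card]
    have hc : Fintype.card {q : Quotient r // q ≠ Quotient.mk'' b} =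
        Fintype.card (Quotient r) - Fintype.card {q : Quotient r // q = Quotient.mk'' b} :=
      Fintype.card_subtype_compl _
    have h1' : Fintype.card {q : Quotient r // q = Quotient.mk'' b} = 1 :=
      Fintype.card_subtype_eq _
    have hpos : 0 < Fintype.card (Quotient r) :=
      Fintype.card_pos_iff.2 ⟨Quotient.mk'' b⟩
    omega
  omega
end Machinery2
section Machinery3
variable {H : Type*} [Fintype H] [DecidableEq H]

lemma orbitRel_zpowers_le (π : Equiv.Perm H) (r : Setoid H)
    (h : ∀ x, r (π x) x) :
    ∀ x y, (MulAction.orbitRel (Subgroup.zpowers π) H) x y → r x y := by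
  rw [Subgroup.zpowers_eq_closure]
  intro x y hxy
  refine orbitRel_closure_le {π} r ?_ x y hxy
  rintro g rfl
  exact h

lemma pow_orbitRel (π : Equiv.Perm H) (j : ℕ) (x : H) :
    (MulAction.orbitRel (Subgroup.zpowers π) H) ((π ^ j) x) x :=
  orbitRel_gen (Subgroup.pow_mem _ (Subgroup.mem_zpowers π) j) x

/-- merge case: if `a` and `b` lie in different `π`-cycles, then they lie in the same
`π * swap a b`-cycle. -/
lemma swap_mul_rel_of_not_rel (π : Equiv.Perm H) (a b : H) (hab : a ≠ b)
    (hnab : ¬ (MulAction.orbitRel (Subgroup.zpowers π) H) a b) :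
    (MulAction.orbitRel (Subgroup.zpowers (π * Equiv.swap a b)) H) b a := by
  set π' := π * Equiv.swap a b with hπ'
  have hper : b ∈ Function.periodicPts ⇑π := by
    refine ⟨orderOf π, orderOf_pos π, ?_⟩
    show (⇑π)^[orderOf π] b = b
    rw [← Equiv.Perm.coe_pow, pow_orderOf_eq_one]
    rfl
  set m := Function.minimalPeriod ⇑π b with hm
  have hmpos : 0 < m := Function.minimalPeriod_pos_of_mem_periodicPts hper
  have hnot_a : ∀ j : ℕ, (π ^ j) b ≠ a := by
    intro j hcon
    exact hnab (hcon ▸ pow_orbitRel π j b)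
  have hnot_b : ∀ j : ℕ, 0 < j → j < m → (π ^ j) b ≠ b := by
    intro j hj hjm hcon
    have : Function.IsPeriodicPt ⇑π j b := by
      show (⇑π)^[j] b = b
      rw [← Equiv.Perm.coe_pow]; exact hcon
    exact absurd (this.minimalPeriod_le hj) (by omega)
  have key : ∀ j : ℕ, 1 ≤ j → j ≤ m → (π' ^ j) a = (π ^ j) b := by
    intro j
    induction j with
    | zero => omega
    | succ n ih =>
      intro _ hnm
      rcases Nat.eq_or_lt_of_le (Nat.one_le_iff_ne_zero.2 (Nat.succ_ne_zero n)) with h1 | h1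
      · -- n + 1 = 1
        have hn : n = 0 := by omega
        subst hn
        simp only [zero_add, pow_one, hπ', Equiv.Perm.mul_apply, Equiv.swap_apply_left]
      · have hn1 : 1 ≤ n := by omega
        have hihn : (π' ^ n) a = (π ^ n) b := ih hn1 (by omega)
        have hne_b : (π ^ n) b ≠ b := hnot_b n (by omega) (by omega)
        have hne_a : (π ^ n) b ≠ a := hnot_a n
        rw [pow_succ', Equiv.Perm.mul_apply, hihn, pow_succ', Equiv.Perm.mul_apply]
        show π (Equiv.swap a b ((π ^ n) b)) = π ((π ^ n) b)
        rw [Equiv.swap_apply_of_ne_of_ne hne_a hne_b]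
  have hfinal : (π' ^ m) a = b := by
    rw [key m hmpos le_rfl]
    have := Function.iterate_minimalPeriod (f := ⇑π) (x := b)
    rwa [← Equiv.Perm.coe_pow] at this
  rw [MulAction.orbitRel_apply, MulAction.mem_orbit_iff]
  exact ⟨⟨π' ^ m, Subgroup.pow_mem _ (Subgroup.mem_zpowers π') m⟩, hfinal⟩
end Machinery3

section Machinery4
variable {H : Type*} [Fintype H] [DecidableEq H]

lemma swap_mul_apply_left (π : Equiv.Perm H) (a b : H) :
    (π * Equiv.swap a b) a = π b := by simp
lemma swap_mul_apply_right (π : Equiv.Perm H) (a b : H) :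
    (π * Equiv.swap a b) b = π a := by simp
lemma swap_mul_apply_other (π : Equiv.Perm H) (a b x : H) (hxa : x ≠ a) (hxb : x ≠ b) :
    (π * Equiv.swap a b) x = π x := by
  simp [Equiv.swap_apply_of_ne_of_ne hxa hxb]

/-- merge: if `a ≁ b` under `π` then multiplying by the swap strictly decreases the
number of orbits. -/
lemma permOrbits_swap_mul_of_not_rel (π : Equiv.Perm H) (a b : H) (hab : a ≠ b)
    (hnab : ¬ (MulAction.orbitRel (Subgroup.zpowers π) H) a b) :
    Nat.card (Quotient (MulAction.orbitRel (Subgroup.zpowers (π * Equiv.swap a b)) H)) + 1 ≤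
      Nat.card (Quotient (MulAction.orbitRel (Subgroup.zpowers π) H)) := by
  set π' := π * Equiv.swap a b with hπ'
  set r := MulAction.orbitRel (Subgroup.zpowers π) H with hr
  set s := MulAction.orbitRel (Subgroup.zpowers π') H with hs
  have hgen : ∀ x, s (π' x) x := fun x => orbitRel_gen (Subgroup.mem_zpowers π') x
  have hba : s b a := swap_mul_rel_of_not_rel π a b hab hnab
  have hle : ∀ x y, r x y → s x y := by
    refine orbitRel_zpowers_le π s ?_
    intro x
    by_cases hxa : x = a
    · rw [hxa]
      rw [show π a = π' b from (swap_mul_apply_right π a b).symm]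
      exact s.trans' (hgen b) hba
    · by_cases hxb : x = b
      · rw [hxb]
        rw [show π b = π' a from (swap_mul_apply_left π a b).symm]
        exact s.trans' (hgen a) (s.symm' hba)
      · rw [← swap_mul_apply_other π a b x hxa hxb]
        exact hgen x
  exact natCard_quot_add_one_le a b hle (s.symm' hba) hnab

/-- split: multiplying by a swap of two elements in the same orbit increases the
number of orbits by at most one. -/
lemma permOrbits_swap_mul_of_rel (π : Equiv.Perm H) (a b : H) (hab : a ≠ b)
    (hyes : (MulAction.orbitRel (Subgroup.zpowers π) H) a b) :
    Nat.card (Quotient (MulAction.orbitRel (Subgroup.zpowers (π * Equiv.swap a b)) H)) ≤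
      Nat.card (Quotient (MulAction.orbitRel (Subgroup.zpowers π) H)) + 1 := by
  set π' := π * Equiv.swap a b with hπ'
  set r := MulAction.orbitRel (Subgroup.zpowers π) H with hr
  set s := MulAction.orbitRel (Subgroup.zpowers π') H with hs
  have hgen : ∀ x, r (π x) x := fun x => orbitRel_gen (Subgroup.mem_zpowers π) x
  have hle : ∀ x y, s x y → r x y := by
    refine orbitRel_zpowers_le π' r ?_
    intro x
    by_cases hxa : x = a
    · rw [hxa]
      rw [swap_mul_apply_left π a b]
      exact r.trans' (hgen b) (r.symm' hyes)
    · by_cases hxb : x = b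
      · rw [hxb]
        rw [swap_mul_apply_right π a b]
        exact r.trans' (hgen a) hyes
      · rw [swap_mul_apply_other π a b x hxa hxb]
        exact hgen x
  have hdec : ∀ x y, r x y → (pairJoin s a b) x y := by
    refine orbitRel_zpowers_le π (pairJoin s a b) ?_
    intro x
    have hgen' : ∀ x, s (π' x) x := fun x => orbitRel_gen (Subgroup.mem_zpowers π') x
    by_cases hxa : x = a
    · rw [hxa]
      rw [show π a = π' b from (swap_mul_apply_right π a b).symm]
      exact Or.inr (Or.inr ⟨hgen' b, s.refl a⟩)
    · by_cases hxb : x = b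
      · rw [hxb]
        rw [show π b = π' a from (swap_mul_apply_left π a b).symm]
        exact Or.inr (Or.inl ⟨hgen' a, s.refl b⟩)
      · rw [← swap_mul_apply_other π a b x hxa hxb]
        exact Or.inl (hgen' x)
  exact natCard_quot_le_add_one a b hle hdec
end Machinery4

section Step
open Equiv MulAction Subgroup
variable {H : Type*} [Fintype H] [DecidableEq H]

lemma restrictPerm_apply (θ : Equiv.Perm H) (S : Finset H)
    (hcl : ∀ x ∈ S, θ x ∈ S) (hinv : ∀ x, θ (θ x) = x) (x : H) :
    restrictPerm θ S x = if x ∈ S then θ x else x := by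
  rw [restrictPerm, dif_pos ⟨hcl, hinv⟩]; rfl

lemma kCount_eq (σ θ : Equiv.Perm H) (S : Finset H) :
    (kCount σ θ S : ℕ) = Nat.card (Quotient (MulAction.orbitRel
      (Subgroup.closure {σ, restrictPerm θ S} : Subgroup (Equiv.Perm H)) H)) := rfl

lemma bcCount_eq (σ θ : Equiv.Perm H) (S : Finset H) :
    (bcCount σ θ S : ℕ) = Nat.card (Quotient (MulAction.orbitRel
      (Subgroup.zpowers (σ * restrictPerm θ S)) H)) := rfl

/-- the genus expression `2k - bc + e` -/
noncomputable def gExpr (σ θ : Equiv.Perm H) (S : Finset H) : ℤ :=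
  2 * (kCount σ θ S : ℤ) - (bcCount σ θ S : ℤ) + eCount S

lemma gExpr_step (σ θ : Equiv.Perm H) (hinv : ∀ x, θ (θ x) = x) (hfp : ∀ x, θ x ≠ x)
    (S' : Finset H) (hS'cl : ∀ x ∈ S', θ x ∈ S') (a : H) (ha : a ∉ S') :
    gExpr σ θ S' ≤ gExpr σ θ (insert a (insert (θ a) S')) := by
  classical
  set b := θ a with hb
  have hab : a ≠ b := fun h => hfp a (hb.symm.trans h.symm)
  have hbS' : b ∉ S' := fun hmem => ha (by have := hS'cl b hmem; rwa [hb, hinv a] at this)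
  set T := insert a (insert b S') with hT
  have hTcl : ∀ x ∈ T, θ x ∈ T := by
    intro x hx
    rcases Finset.mem_insert.1 hx with rfl | hx
    · exact Finset.mem_insert_of_mem (Finset.mem_insert_self _ _)
    rcases Finset.mem_insert.1 hx with rfl | hx
    · rw [hb, hinv a]; exact Finset.mem_insert_self _ _
    · exact Finset.mem_insert_of_mem (Finset.mem_insert_of_mem (hS'cl x hx))
  set τ' := restrictPerm θ S' with hτ'def
  set τT := restrictPerm θ T with hτTdef
  have hτ'a : ∀ x : H, τ' x = if x ∈ S' then θ x else x := restrictPerm_apply θ S' hS'cl hinv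
  have hτTa : ∀ x : H, τT x = if x ∈ T then θ x else x := restrictPerm_apply θ T hTcl hinv
  have hτ'_a : τ' a = a := by rw [hτ'a, if_neg ha]
  have hτ'_b : τ' b = b := by rw [hτ'a, if_neg hbS']
  have hτT_a : τT a = b := by rw [hτTa, if_pos (Finset.mem_insert_self _ _)]
  have hτT_b : τT b = a := by
    rw [hτTa, if_pos (Finset.mem_insert_of_mem (Finset.mem_insert_self _ _)), hb, hinv a]
  have hτ'τT : ∀ x : H, x ≠ a → x ≠ b → τ' x = τT x := by
    intro x hxa hxb
    have hmem : x ∈ T ↔ x ∈ S' := by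
      simp [hT, Finset.mem_insert, hxa, hxb]
    by_cases hxS : x ∈ S'
    · rw [hτ'a, hτTa, if_pos hxS, if_pos (hmem.2 hxS)]
    · rw [hτ'a, hτTa, if_neg hxS, if_neg (fun h => hxS (hmem.1 h))]
  -- the half-edge permutations
  set π := σ * τ' with hπdef
  set πT := σ * τT with hπTdef
  have hπT : πT = π * Equiv.swap a b := by
    rw [hπTdef, hπdef, mul_assoc]
    congr 1
    ext x
    rw [Equiv.Perm.mul_apply]
    by_cases hxa : x = a
    · rw [hxa, Equiv.swap_apply_left, hτ'_b, hτT_a]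
    by_cases hxb : x = b
    · rw [hxb, Equiv.swap_apply_right, hτ'_a, hτT_b]
    · rw [Equiv.swap_apply_of_ne_of_ne hxa hxb, hτ'τT x hxa hxb]
  -- component relations
  set CK := (Subgroup.closure {σ, τ'} : Subgroup (Equiv.Perm H)) with hCK
  set CT := (Subgroup.closure {σ, τT} : Subgroup (Equiv.Perm H)) with hCT
  set rK := MulAction.orbitRel CK H with hrK
  set rT := MulAction.orbitRel CT H with hrT
  have hσK : σ ∈ CK := Subgroup.subset_closure (Set.mem_insert _ _)
  have hτ'K : τ' ∈ CK := Subgroup.subset_closure (Set.mem_insert_of_mem _ rfl)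
  have hσT : σ ∈ CT := Subgroup.subset_closure (Set.mem_insert _ _)
  have hτTT : τT ∈ CT := Subgroup.subset_closure (Set.mem_insert_of_mem _ rfl)
  have hKT : ∀ x y, rK x y → rT x y := by
    refine orbitRel_closure_le {σ, τ'} rT ?_
    rintro g (rfl | rfl)
    · exact fun x => orbitRel_gen hσT x
    · intro x
      by_cases hxa : x = a
      · rw [hxa, hτ'_a]
      by_cases hxb : x = b
      · rw [hxb, hτ'_b]
      · rw [hτ'τT x hxa hxb]; exact orbitRel_gen hτTT x
  have hk_le : (kCount σ θ T : ℕ) ≤ kCount σ θ S' := by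
    rw [kCount_eq, kCount_eq]
    exact natCard_quot_le_of_le hKT
  have hk_ge : (kCount σ θ S' : ℕ) ≤ kCount σ θ T + 1 := by
    rw [kCount_eq, kCount_eq]
    refine natCard_quot_le_add_one a b hKT ?_
    refine orbitRel_closure_le {σ, τT} (pairJoin rK a b) ?_
    rintro g (rfl | rfl)
    · exact fun x => Or.inl (orbitRel_gen hσK x)
    · intro x
      by_cases hxa : x = a
      · rw [hxa, hτT_a]
        exact Or.inr (Or.inr ⟨rK.refl b, rK.refl a⟩)
      by_cases hxb : x = b
      · rw [hxb, hτT_b]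
        exact Or.inr (Or.inl ⟨rK.refl a, rK.refl b⟩)
      · rw [← hτ'τT x hxa hxb]
        exact Or.inl (orbitRel_gen hτ'K x)
  have hπK : ∀ x y, (MulAction.orbitRel (Subgroup.zpowers π) H) x y → rK x y :=
    orbitRel_zpowers_le π rK (fun x => orbitRel_gen (mul_mem hσK hτ'K) x)
  -- edge count
  have hcard : T.card = S'.card + 2 := by
    rw [hT, Finset.card_insert_of_notMem (by simp [hab, ha]),
      Finset.card_insert_of_notMem hbS']
  have he : eCount T = eCount S' + 1 := by
    rw [eCount, eCount, hcard]
    have : (S'.card + 2) / 2 = S'.card / 2 + 1 := by omega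
    rw [this]
    push_cast
    ring
  -- main case split
  by_cases hrel : (MulAction.orbitRel (Subgroup.zpowers π) H) a b
  · -- split case: same boundary component
    have hbc : (bcCount σ θ T : ℕ) ≤ bcCount σ θ S' + 1 := by
      rw [bcCount_eq, bcCount_eq, ← hπdef, ← hτTdef, ← hπTdef, hπT]
      exact permOrbits_swap_mul_of_rel π a b hab hrel
    have hcomp : rK a b := hπK a b hrel
    have hk_ge' : (kCount σ θ S' : ℕ) ≤ kCount σ θ T := by
      rw [kCount_eq, kCount_eq]
      refine natCard_quot_le_of_le ?_
      refine orbitRel_closure_le {σ, τT} rK ?_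
      rintro g (rfl | rfl)
      · exact fun x => orbitRel_gen hσK x
      · intro x
        by_cases hxa : x = a
        · rw [hxa, hτT_a]; exact rK.symm' hcomp
        by_cases hxb : x = b
        · rw [hxb, hτT_b]; exact hcomp
        · rw [← hτ'τT x hxa hxb]; exact orbitRel_gen hτ'K x
    rw [gExpr, gExpr, he]
    have h1 : (kCount σ θ T : ℤ) = kCount σ θ S' := by
      have := hk_le; have := hk_ge'; omega
    rw [h1]
    have : (bcCount σ θ T : ℤ) ≤ bcCount σ θ S' + 1 := by exact_mod_cast hbc
    linarith
  · -- merge case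
    have hbc : (bcCount σ θ T : ℕ) + 1 ≤ bcCount σ θ S' := by
      rw [bcCount_eq, bcCount_eq, ← hπdef, ← hτTdef, ← hπTdef, hπT]
      exact permOrbits_swap_mul_of_not_rel π a b hab hrel
    rw [gExpr, gExpr, he]
    have h1 : (kCount σ θ S' : ℤ) ≤ kCount σ θ T + 1 := by exact_mod_cast hk_ge
    have h2 : (bcCount σ θ T : ℤ) + 1 ≤ bcCount σ θ S' := by exact_mod_cast hbc
    linarith

lemma gExpr_mono (σ θ : Equiv.Perm H) (hinv : ∀ x, θ (θ x) = x) (hfp : ∀ x, θ x ≠ x)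
    (S : Finset H) (hS : ∀ x ∈ S, θ x ∈ S) :
    ∀ n : ℕ, ∀ S' : Finset H, (∀ x ∈ S', θ x ∈ S') → S' ⊆ S → (S \ S').card ≤ n →
      gExpr σ θ S' ≤ gExpr σ θ S := by
  intro n
  induction n with
  | zero =>
    intro S' hS' hsub hcard
    have : S \ S' = ∅ := Finset.card_eq_zero.1 (Nat.le_zero.1 hcard)
    have hSS : S' = S := by
      apply Finset.Subset.antisymm hsub
      intro x hx
      by_contra hxn
      exact absurd (Finset.mem_sdiff.2 ⟨hx, hxn⟩) (by simp [this])
    rw [hSS]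
  | succ n ih =>
    intro S' hS' hsub hcard
    by_cases hSS : S' = S
    · rw [hSS]
    · have hne : (S \ S').Nonempty := by
        rw [Finset.sdiff_nonempty]
        intro hcon
        exact hSS (Finset.Subset.antisymm hsub hcon)
      obtain ⟨a, haSD⟩ := hne
      have haS : a ∈ S := (Finset.mem_sdiff.1 haSD).1
      have haS' : a ∉ S' := (Finset.mem_sdiff.1 haSD).2
      set T := insert a (insert (θ a) S') with hT
      have hTsub : T ⊆ S := by
        intro x hx
        rcases Finset.mem_insert.1 hx with rfl | hx
        · exact haS
        rcases Finset.mem_insert.1 hx with rfl | hx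
        · exact hS a haS
        · exact hsub hx
      have hTcl : ∀ x ∈ T, θ x ∈ T := by
        intro x hx
        rcases Finset.mem_insert.1 hx with rfl | hx
        · exact Finset.mem_insert_of_mem (Finset.mem_insert_self _ _)
        rcases Finset.mem_insert.1 hx with rfl | hx
        · rw [hinv a]; exact Finset.mem_insert_self _ _
        · exact Finset.mem_insert_of_mem (Finset.mem_insert_of_mem (hS' x hx))
      have hstep : gExpr σ θ S' ≤ gExpr σ θ T :=
        gExpr_step σ θ hinv hfp S' hS' a haS'
      have hcard' : (S \ T).card ≤ n := by
        have hsub2 : S \ T ⊆ S \ S' := by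
          apply Finset.sdiff_subset_sdiff (le_refl S)
          intro x hx
          exact Finset.mem_insert_of_mem (Finset.mem_insert_of_mem hx)
        have hstrict : (S \ T).card < (S \ S').card := by
          apply Finset.card_lt_card
          rw [Finset.ssubset_iff_of_subset hsub2]
          exact ⟨a, haSD, by simp [hT]⟩
        omega
      exact le_trans hstep (ih T hTcl hTsub hcard')
end Step

/-- **Monotonicity of genus under edge deletion.**  For an orientable ribbon graph
encoded by a combinatorial map `(H, σ, θ)` and nested spanning subgraphs
`F′ ⊆ F ⊆ E` (encoded by `θ`-invariant sets `S' ⊆ S` of half-edges), the genus does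
not increase: `k(F′) - bc(F′) + n(F′) ≤ k(F) - bc(F) + n(F)`. -/
theorem genus_monotone_of_subset
    {H : Type*} [Fintype H] [DecidableEq H] (σ θ : Equiv.Perm H)
    (hinv : ∀ a, θ (θ a) = a) (hfp : ∀ a, θ a ≠ a)
    (S' S : Finset H) (hS' : ∀ a ∈ S', θ a ∈ S') (hS : ∀ a ∈ S, θ a ∈ S)
    (hsub : S' ⊆ S) :
    (kCount σ θ S' : ℤ) - (bcCount σ θ S' : ℤ) + nCount σ θ S' ≤
      (kCount σ θ S : ℤ) - (bcCount σ θ S : ℤ) + nCount σ θ S := by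
  have key : gExpr σ θ S' ≤ gExpr σ θ S := by
    refine gExpr_mono σ θ hinv hfp S hS (S \ S').card S' hS' hsub le_rfl
  rw [gExpr, gExpr] at key
  rw [nCount, nCount, rCount, rCount]
  linarith
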